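/- arXiv:2505.19438 — 2 statements merged into one kernel-verified Lean document; each statement's English description precedes it below -/
import Mathlib

section
/- Define φ(z) = min(1, e^z)/(1 + e^z). Let m ≥ 0 and let z₁, z₂ be real numbers with |z₁| ≥ m and |z₂| ≥ m. Then |φ(z₁) − φ(z₂)| ≤ (1/(e^{m/2} + e^{-m/2})²)·|z₁ − z₂|. -/
private lemma sigmoid_hasDerivAt (t : ℝ) :
    HasDerivAt (fun t => Real.exp t / (1 + Real.exp t))
      (Real.exp t / (1 + Real.exp t) ^ 2) t := by
  have hpos : (1 : ℝ) + Real.exp t ≠ 0 := by positivity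
  have h := (Real.hasDerivAt_exp t).div
    ((hasDerivAt_const t (1 : ℝ)).add (Real.hasDerivAt_exp t)) hpos
  refine h.congr_deriv ?_
  simp only [Pi.add_apply, zero_add]
  ring

private lemma deriv_bound (m t : ℝ) (hm : 0 ≤ m) (ht : t ≤ -m) :
    Real.exp t / (1 + Real.exp t) ^ 2
      ≤ 1 / (Real.exp (m / 2) + Real.exp (-m / 2)) ^ 2 := by
  set a := Real.exp (m / 2) with ha
  set s := Real.exp (t / 2) with hs
  have ha1 : 1 ≤ a := Real.one_le_exp (by linarith)
  have hspos : 0 < s := Real.exp_pos _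
  have hapos : 0 < a := Real.exp_pos _
  have hsa : s * a ≤ 1 := by
    rw [hs, ha, ← Real.exp_add]
    exact Real.exp_le_one_iff.mpr (by linarith)
  have hs1 : s ≤ 1 := Real.exp_le_one_iff.mpr (by linarith)
  have het : Real.exp t = s ^ 2 := by
    rw [hs, sq, ← Real.exp_add]
    ring_nf
  have hem : Real.exp (-m / 2) = a⁻¹ := by
    rw [neg_div, Real.exp_neg, ha]
  rw [hem, het, div_le_div_iff₀ (by positivity) (by positivity), one_mul]
  have hab : a * a⁻¹ = 1 := mul_inv_cancel₀ (ne_of_gt hapos)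
  have hv1 : s * a⁻¹ ≤ 1 := by
    have : a⁻¹ ≤ 1 := by
      rw [inv_le_one_iff₀]; right; exact ha1
    nlinarith
  have huv : (s * a) * (s * a⁻¹) = s ^ 2 := by
    field_simp
  have hu2 : 0 ≤ 1 - (s * a) ^ 2 := by nlinarith [mul_pos hspos hapos]
  have hv2 : 0 ≤ 1 - (s * a⁻¹) ^ 2 := by nlinarith [mul_pos hspos (inv_pos.mpr hapos)]
  have expand : s ^ 2 * (a + a⁻¹) ^ 2
      = (s * a) ^ 2 + 2 * (s * a * (s * a⁻¹)) + (s * a⁻¹) ^ 2 := by ring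
  rw [expand, huv]
  nlinarith [mul_nonneg hu2 hv2, huv]

private lemma lip (m : ℝ) (hm : 0 ≤ m) {a b : ℝ} (haa : a ≤ -m) (hbb : b ≤ -m) :
    |Real.exp a / (1 + Real.exp a) - Real.exp b / (1 + Real.exp b)|
      ≤ 1 / (Real.exp (m / 2) + Real.exp (-m / 2)) ^ 2 * |a - b| := by
  have := Convex.norm_image_sub_le_of_norm_hasDerivWithin_le
    (f := fun t => Real.exp t / (1 + Real.exp t))
    (f' := fun t => Real.exp t / (1 + Real.exp t) ^ 2)
    (C := 1 / (Real.exp (m / 2) + Real.exp (-m / 2)) ^ 2)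
    (s := Set.Iic (-m))
    (fun x _ => (sigmoid_hasDerivAt x).hasDerivWithinAt)
    (fun x hx => by
      rw [Real.norm_eq_abs, abs_of_nonneg (by positivity)]
      exact deriv_bound m x hm hx)
    (convex_Iic _) hbb haa
  simpa [Real.norm_eq_abs] using this

/-- With `φ(z) = min(1, e^z)/(1 + e^z)`, `m ≥ 0`, and reals
`z₁, z₂` with `|z₁| ≥ m` and `|z₂| ≥ m`, one has
`|φ(z₁) − φ(z₂)| ≤ (1/(e^{m/2} + e^{-m/2})²)·|z₁ − z₂|`. -/
theorem stmt12 (m : ℝ) (hm : 0 ≤ m) (z₁ z₂ : ℝ)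
    (h₁ : m ≤ |z₁|) (h₂ : m ≤ |z₂|) :
    |min 1 (Real.exp z₁) / (1 + Real.exp z₁)
      - min 1 (Real.exp z₂) / (1 + Real.exp z₂)|
      ≤ 1 / (Real.exp (m / 2) + Real.exp (-m / 2)) ^ 2 * |z₁ - z₂| := by
  have key : ∀ z : ℝ, min 1 (Real.exp z) / (1 + Real.exp z)
      = Real.exp (-|z|) / (1 + Real.exp (-|z|)) := by
    intro z
    rcases le_total z 0 with h | h
    · rw [abs_of_nonpos h, neg_neg,
        min_eq_right (Real.exp_le_one_iff.mpr h)]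
    · rw [abs_of_nonneg h, min_eq_left (Real.one_le_exp h), Real.exp_neg]
      have hz : (0 : ℝ) < Real.exp z := Real.exp_pos z
      field_simp
      ring
  rw [key z₁, key z₂]
  have hC : 0 ≤ 1 / (Real.exp (m / 2) + Real.exp (-m / 2)) ^ 2 := by positivity
  calc |Real.exp (-|z₁|) / (1 + Real.exp (-|z₁|))
        - Real.exp (-|z₂|) / (1 + Real.exp (-|z₂|))|
      ≤ 1 / (Real.exp (m / 2) + Real.exp (-m / 2)) ^ 2 * |(-|z₁|) - (-|z₂|)| :=
        lip m hm (by linarith) (by linarith)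
    _ ≤ 1 / (Real.exp (m / 2) + Real.exp (-m / 2)) ^ 2 * |z₁ - z₂| := by
        apply mul_le_mul_of_nonneg_left _ hC
        calc |(-|z₁|) - (-|z₂|)|
            = abs (|z₂| - |z₁|) := by
              rw [show (-|z₁|) - (-|z₂|) = |z₂| - |z₁| by ring]
          _ ≤ |z₂ - z₁| := abs_abs_sub_abs_le_abs_sub z₂ z₁
          _ = |z₁ - z₂| := abs_sub_comm _ _
end

section
/- Let β ≥ 0, W an N×N real matrix, h ∈ ℝ, and suppose 2β·sup_i Σ_{k≠i}|W_{ik}| ≤ |h|. Fix i ≠ j and x ∈ {-1,1}^N. Let p(x) = e^{a(x)}/(e^{a(x)} + e^{-a(x)}) with a(x) = −(β/2)Σ_{k≠i}W_{ik}x_k + h (the conditional probability that spin i equals +1 given the others under ν_{β,h}). Then for configurations x, x̂ that agree off site j, |p(x) − p(x̂)| ≤ 2β|W_{ij}|/(e^{3|h|/4} + e^{-3|h|/4}). -/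
open Finset


lemma coshmono {c t : ℝ} (hc : 0 ≤ c) (h : c ≤ t) :
    Real.exp c + Real.exp (-c) ≤ Real.exp t + Real.exp (-t) := by
  have hA : 1 ≤ Real.exp c := Real.one_le_exp hc
  have hAB : Real.exp c ≤ Real.exp t := Real.exp_le_exp.2 h
  have h1 : Real.exp c * Real.exp (-c) = 1 := by rw [← Real.exp_add]; simp
  have h2 : Real.exp t * Real.exp (-t) = 1 := by rw [← Real.exp_add]; simp
  have h3 : 0 < Real.exp (-t) := Real.exp_pos _
  have h4 : 0 < Real.exp (-c) := Real.exp_pos _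
  nlinarith [mul_nonneg (sub_nonneg.2 hAB) (sub_nonneg.2 hA)]

-- positive case, with t ≤ s
lemma gpos {c m s t : ℝ} (hc : 0 ≤ c) (hm : 0 ≤ m) (hs : c ≤ s) (ht : c ≤ t)
    (hts : t ≤ s) (hd : s - t ≤ m) :
    |Real.exp s / (Real.exp s + Real.exp (-s)) -
      Real.exp t / (Real.exp t + Real.exp (-t))| ≤
      2 * m / (Real.exp c + Real.exp (-c)) := by
  have Ds : 0 < Real.exp s + Real.exp (-s) := by positivity
  have Dt : 0 < Real.exp t + Real.exp (-t) := by positivity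
  have Dc : 0 < Real.exp c + Real.exp (-c) := by positivity
  have key : Real.exp s / (Real.exp s + Real.exp (-s)) -
      Real.exp t / (Real.exp t + Real.exp (-t)) =
      (Real.exp s * Real.exp (-t) - Real.exp t * Real.exp (-s)) /
        ((Real.exp s + Real.exp (-s)) * (Real.exp t + Real.exp (-t))) := by
    field_simp
    ring
  -- numerator facts
  have hst : Real.exp s * Real.exp (-t) = Real.exp (s - t) := by
    rw [← Real.exp_add]; ring_nf
  have hts' : Real.exp t * Real.exp (-s) = Real.exp (t - s) := by
    rw [← Real.exp_add]; ring_nf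
  have hnum0 : 0 ≤ Real.exp (s - t) - Real.exp (t - s) :=
    sub_nonneg.2 (Real.exp_le_exp.2 (by linarith))
  -- exp(s-t) - exp(t-s) ≤ 2(s-t) * exp(s-t)
  have hlin : Real.exp (t - s) ≥ Real.exp (s - t) * (1 - 2 * (s - t)) := by
    have h1 : Real.exp (t - s) = Real.exp (s - t) * Real.exp (-(2 * (s - t))) := by
      rw [← Real.exp_add]; ring_nf
    have h2 : 1 - 2 * (s - t) ≤ Real.exp (-(2 * (s - t))) := by
      have := Real.add_one_le_exp (-(2 * (s - t)))
      linarith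
    rw [h1]
    have := Real.exp_pos (s - t)
    nlinarith
  have hexpst : Real.exp (s - t) ≤ Real.exp s + Real.exp (-s) := by
    have : Real.exp (s - t) ≤ Real.exp s := Real.exp_le_exp.2 (by linarith)
    nlinarith [Real.exp_pos (-s)]
  have hnum : Real.exp (s - t) - Real.exp (t - s) ≤
      2 * m * (Real.exp s + Real.exp (-s)) := by
    have h3 : Real.exp (s - t) - Real.exp (t - s) ≤ 2 * (s - t) * Real.exp (s - t) := by
      nlinarith
    have h4 : 2 * (s - t) * Real.exp (s - t) ≤ 2 * m * (Real.exp s + Real.exp (-s)) := by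
      have h5 : 0 ≤ s - t := by linarith
      nlinarith [Real.exp_pos (s - t)]
    linarith
  rw [key, hst, hts', abs_div, abs_of_nonneg hnum0,
    abs_of_pos (mul_pos Ds Dt)]
  rw [div_le_div_iff₀ (mul_pos Ds Dt) Dc]
  have hcosh : Real.exp c + Real.exp (-c) ≤ Real.exp t + Real.exp (-t) :=
    coshmono hc ht
  nlinarith [mul_le_mul_of_nonneg_left hcosh (by positivity : (0:ℝ) ≤ Real.exp (s-t) - Real.exp (t-s))]

lemma gboth {c m s t : ℝ} (hc : 0 ≤ c) (hm : 0 ≤ m) (hd : |s - t| ≤ m)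
    (hcase : (c ≤ s ∧ c ≤ t) ∨ (s ≤ -c ∧ t ≤ -c)) :
    |Real.exp s / (Real.exp s + Real.exp (-s)) -
      Real.exp t / (Real.exp t + Real.exp (-t))| ≤
      2 * m / (Real.exp c + Real.exp (-c)) := by
  have habs1 : s - t ≤ m := le_trans (le_abs_self _) hd
  have habs2 : t - s ≤ m := le_trans (by rw [← abs_sub_comm]; exact le_abs_self _) hd
  rcases hcase with ⟨h1, h2⟩ | ⟨h1, h2⟩
  · rcases le_total t s with hts | hts
    · exact gpos hc hm h1 h2 hts habs1
    · rw [abs_sub_comm]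
      exact gpos hc hm h2 h1 hts habs2
  · -- reflect: g z = 1 - g (-z)
    have refl : ∀ z : ℝ, Real.exp z / (Real.exp z + Real.exp (-z)) =
        1 - Real.exp (-z) / (Real.exp (-z) + Real.exp (-(-z))) := by
      intro z
      have : (0:ℝ) < Real.exp z + Real.exp (-z) := by positivity
      rw [neg_neg]
      field_simp
      ring
    rw [refl s, refl t]
    have e1 : c ≤ -s := by linarith
    have e2 : c ≤ -t := by linarith
    have : (1 - Real.exp (-s) / (Real.exp (-s) + Real.exp (-(-s)))) -
        (1 - Real.exp (-t) / (Real.exp (-t) + Real.exp (-(-t)))) =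
        Real.exp (-t) / (Real.exp (-t) + Real.exp (-(-t))) -
          Real.exp (-s) / (Real.exp (-s) + Real.exp (-(-s))) := by ring
    rw [this]
    rcases le_total (-s) (-t) with hts | hts
    · exact gpos hc hm e2 e1 hts (by linarith)
    · rw [abs_sub_comm]
      exact gpos hc hm e1 e2 hts (by linarith)

/-- Let `β ≥ 0`, `W` an `N×N` real matrix, `h ∈ ℝ` with
`2β·sup_i Σ_{k≠i}|W_{ik}| ≤ |h|`. Fix `i ≠ j` and let
`p(x) = e^{a(x)}/(e^{a(x)} + e^{-a(x)})` with
`a(x) = −(β/2)Σ_{k≠i}W_{ik}x_k + h` (the conditional probability that spin `i`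
is `+1` under `ν_{β,h}`). Then for configurations `x, x' ∈ {-1,1}^N` agreeing
off site `j`, `|p(x) − p(x')| ≤ 2β|W_{ij}|/(e^{3|h|/4} + e^{-3|h|/4})`. -/
theorem stmt17 (N : ℕ) (β : ℝ) (hβ : 0 ≤ β) (W : Fin N → Fin N → ℝ) (h : ℝ)
    (hfield : ∀ i : Fin N, 2 * β * ∑ k ∈ univ.erase i, |W i k| ≤ |h|)
    (i j : Fin N) (hij : i ≠ j)
    (x x' : Fin N → ℝ)
    (hx : ∀ k, x k = 1 ∨ x k = -1) (hx' : ∀ k, x' k = 1 ∨ x' k = -1)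
    (hoff : ∀ k, k ≠ j → x k = x' k) :
    |(fun z : Fin N → ℝ =>
        Real.exp (-(β / 2) * ∑ k ∈ univ.erase i, W i k * z k + h) /
          (Real.exp (-(β / 2) * ∑ k ∈ univ.erase i, W i k * z k + h) +
            Real.exp (-(-(β / 2) * ∑ k ∈ univ.erase i, W i k * z k + h)))) x
      - (fun z : Fin N → ℝ =>
        Real.exp (-(β / 2) * ∑ k ∈ univ.erase i, W i k * z k + h) /
          (Real.exp (-(β / 2) * ∑ k ∈ univ.erase i, W i k * z k + h) +
            Real.exp (-(-(β / 2) * ∑ k ∈ univ.erase i, W i k * z k + h)))) x'|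
      ≤ 2 * β * |W i j| / (Real.exp (3 * |h| / 4) + Real.exp (-(3 * |h|) / 4)) := by
  set a := -(β / 2) * ∑ k ∈ univ.erase i, W i k * x k + h with ha_def
  set a' := -(β / 2) * ∑ k ∈ univ.erase i, W i k * x' k + h with ha'_def
  have hS0 : 0 ≤ ∑ k ∈ univ.erase i, |W i k| := sum_nonneg fun k _ => abs_nonneg _
  have hS : 2 * β * ∑ k ∈ univ.erase i, |W i k| ≤ |h| := hfield i
  -- local field stays within |h|/4 of h
  have hcenter : ∀ (y : Fin N → ℝ), (∀ k, y k = 1 ∨ y k = -1) →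
      |-(β / 2) * ∑ k ∈ univ.erase i, W i k * y k| ≤ |h| / 4 := by
    intro y hy
    rw [abs_mul]
    have h1 : |∑ k ∈ univ.erase i, W i k * y k| ≤ ∑ k ∈ univ.erase i, |W i k| := by
      refine le_trans (abs_sum_le_sum_abs _ _) (le_of_eq (sum_congr rfl fun k _ => ?_))
      rw [abs_mul]
      rcases hy k with hk | hk <;> simp [hk]
    have h2 : |-(β / 2)| = β / 2 := by
      rw [abs_neg, abs_of_nonneg (by linarith)]
    rw [h2]
    nlinarith
  have hax : |a - h| ≤ |h| / 4 := by
    rw [ha_def]; simpa using hcenter x hx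
  have hax' : |a' - h| ≤ |h| / 4 := by
    rw [ha'_def]; simpa using hcenter x' hx'
  -- difference of local fields
  have hj : j ∈ univ.erase i := mem_erase.2 ⟨hij.symm, mem_univ j⟩
  have hsum : (∑ k ∈ univ.erase i, W i k * x k) - ∑ k ∈ univ.erase i, W i k * x' k
      = W i j * (x j - x' j) := by
    rw [← Finset.sum_sub_distrib]
    rw [Finset.sum_eq_single_of_mem j hj]
    · ring
    · intro k _ hk
      rw [hoff k hk]; ring
  have hxj : |x j - x' j| ≤ 2 := by
    rcases hx j with h1 | h1 <;> rcases hx' j with h2 | h2 <;> rw [h1, h2] <;> norm_num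
  have hd : |a - a'| ≤ β * |W i j| := by
    have : a - a' = -(β / 2) * (W i j * (x j - x' j)) := by
      rw [ha_def, ha'_def]; rw [← hsum]; ring
    rw [this, abs_mul, abs_mul]
    have h2 : |-(β / 2)| = β / 2 := by
      rw [abs_neg, abs_of_nonneg (by linarith)]
    rw [h2]
    have h3 := mul_le_mul_of_nonneg_left hxj
      (by positivity : (0:ℝ) ≤ β / 2 * |W i j|)
    nlinarith [h3]
  have hm : 0 ≤ β * |W i j| := mul_nonneg hβ (abs_nonneg _)
  have hc : 0 ≤ 3 * |h| / 4 := by positivity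
  have hcase : (3 * |h| / 4 ≤ a ∧ 3 * |h| / 4 ≤ a') ∨
      (a ≤ -(3 * |h| / 4) ∧ a' ≤ -(3 * |h| / 4)) := by
    rcases le_or_gt 0 h with hh | hh
    · left
      rw [abs_of_nonneg hh] at *
      constructor
      · have := abs_le.1 hax; linarith [this.1]
      · have := abs_le.1 hax'; linarith [this.1]
    · right
      rw [abs_of_neg hh] at *
      constructor
      · have := abs_le.1 hax; linarith [this.2]
      · have := abs_le.1 hax'; linarith [this.2]
  have key := gboth (c := 3 * |h| / 4) hc hm hd hcase
  have e1 : 2 * (β * |W i j|) = 2 * β * |W i j| := by ring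
  have e2 : -(3 * |h| / 4) = -(3 * |h|) / 4 := by ring
  rw [e1, e2] at key
  exact key
end
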